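/- arXiv:2008.07978 — 5 statements merged into one kernel-verified Lean document; each statement's English description precedes it below -/
import Mathlib

section
/- Fix K ∈ ℕ, Δ > 0, and ε > 0, and set ε₁ = ε/2 and ε₂ = ε/4. Let the threshold noise density be p₁(z) = (ε₁/(2Δ)) exp(−ε₁|z|/Δ) (the Laplace density with mean 0 and scale Δ/ε₁ = 2Δ/ε) and the query noise density be p₂(y) = (ε₂/(2Δ)) exp(−ε₂|y|/Δ) (Laplace with scale Δ/ε₂ = 4Δ/ε), with CDF Φ₂(t) = ∫_{−∞}^t p₂(u) du. For a query vector a = (a₁, …, a_K) ∈ ℝ^K, define the output probabilities P_k(a) = ∫_ℝ (∏_{i=1}^{k−1} Φ₂(z − a_i)) (1 − Φ₂(z − a_k)) p₁(z) dz for k = 1, …, K, and the failure probability Q(a) = ∫_ℝ (∏_{i=1}^{K} Φ₂(z − a_i)) p₁(z) dz. Then for any two query vectors a, b ∈ ℝ^K with |a_i − b_i| ≤ Δ for all i, one has P_k(a) ≤ e^ε P_k(b) for every k ∈ {1, …, K}, and Q(a) ≤ e^ε Q(b). -/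
open MeasureTheory Real Set

private lemma lap_integrable {b : ℝ} (hb : 0 < b) :
    Integrable (fun x : ℝ => Real.exp (-(b * |x|))) := by
  have h1 : IntegrableOn (fun x : ℝ => Real.exp (-(b * |x|))) (Ioi 0) := by
    refine (exp_neg_integrableOn_Ioi 0 hb).congr_fun (fun x hx => ?_) measurableSet_Ioi
    simp only [abs_of_pos (show (0:ℝ) < x from hx), neg_mul]
  have h2 : IntegrableOn (fun x : ℝ => Real.exp (-(b * |x|))) (Iic 0) := by
    rw [← Measure.map_neg_eq_self (volume : Measure ℝ)]
    have m : MeasurableEmbedding fun x : ℝ => -x :=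
      (Homeomorph.neg ℝ).measurableEmbedding
    rw [m.integrableOn_map_iff]
    simp_rw [Function.comp_def, abs_neg, neg_preimage, neg_Iic, neg_zero]
    exact (integrableOn_Ici_iff_integrableOn_Ioi (hb := enorm_ne_top)).mpr h1
  have h := h2.union h1
  rwa [Iic_union_Ioi, integrableOn_univ] at h

private lemma lap_integral {b : ℝ} (hb : 0 < b) :
    ∫ x : ℝ, Real.exp (-(b * |x|)) = 2 / b := by
  have h := integral_comp_abs (f := fun x => Real.exp (-(b * x)))
  rw [h]
  have h2 : ∫ x in Ioi (0:ℝ), Real.exp (-(b * x)) = b⁻¹ := by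
    have h3 := integral_comp_mul_left_Ioi (fun x => Real.exp (-x)) 0 hb
    simp only [mul_zero, integral_exp_neg_Ioi_zero, smul_eq_mul, mul_one] at h3
    exact h3
  rw [h2, div_eq_mul_inv]

private lemma lap_shift {b d : ℝ} (hb : 0 < b) (hd : 0 ≤ d) (u c : ℝ) :
    d * Real.exp (-(b * |u|)) ≤ Real.exp (b * |c|) * (d * Real.exp (-(b * |u + c|))) := by
  rw [mul_comm (Real.exp (b * |c|)) _, mul_assoc, ← Real.exp_add]
  apply mul_le_mul_of_nonneg_left _ hd
  apply Real.exp_le_exp.2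
  have h1 : |u + c| ≤ |u| + |c| := abs_add_le u c
  have h2 := mul_le_mul_of_nonneg_left h1 hb.le
  rw [mul_add] at h2
  linarith

/-- ε-DP of the Laplace Noisy Backtracking Line Search /
AboveThreshold mechanism, Theorem 1 of the paper.
With threshold-noise density `p₁` Laplace of scale `Δ/ε₁` (`ε₁ = ε/2`) and
query-noise density `p₂` Laplace of scale `Δ/ε₂` (`ε₂ = ε/4`), the probabilities
`P k a` of outputting index `k` and `Q a` of failure satisfy
`P k a ≤ e^ε P k b` and `Q a ≤ e^ε Q b` whenever `|a i − b i| ≤ Δ` for all `i`. -/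
theorem noisyBTLS_laplace_pure_DP
    (K : ℕ) (Δ ε : ℝ) (hΔ : 0 < Δ) (hε : 0 < ε)
    (ε₁ ε₂ : ℝ) (hε₁ : ε₁ = ε / 2) (hε₂ : ε₂ = ε / 4)
    (p₁ p₂ : ℝ → ℝ)
    (hp₁ : ∀ z : ℝ, p₁ z = ε₁ / (2 * Δ) * Real.exp (-(ε₁ * |z|) / Δ))
    (hp₂ : ∀ y : ℝ, p₂ y = ε₂ / (2 * Δ) * Real.exp (-(ε₂ * |y|) / Δ))
    (Φ₂ : ℝ → ℝ) (hΦ₂ : ∀ t : ℝ, Φ₂ t = ∫ u in Set.Iic t, p₂ u)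
    (P : Fin K → (Fin K → ℝ) → ℝ)
    (hP : ∀ (k : Fin K) (a : Fin K → ℝ),
      P k a = ∫ z : ℝ,
        (∏ i ∈ Finset.univ.filter (fun i : Fin K => i < k), Φ₂ (z - a i)) *
          (1 - Φ₂ (z - a k)) * p₁ z)
    (Q : (Fin K → ℝ) → ℝ)
    (hQ : ∀ a : Fin K → ℝ, Q a = ∫ z : ℝ, (∏ i : Fin K, Φ₂ (z - a i)) * p₁ z)
    (a b : Fin K → ℝ) (hab : ∀ i : Fin K, |a i - b i| ≤ Δ) :
    (∀ k : Fin K, P k a ≤ Real.exp ε * P k b) ∧ Q a ≤ Real.exp ε * Q b := by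
  have hε₁pos : 0 < ε₁ := by rw [hε₁]; positivity
  have hε₂pos : 0 < ε₂ := by rw [hε₂]; positivity
  set c₁ : ℝ := ε₁ / Δ with hc₁
  set c₂ : ℝ := ε₂ / Δ with hc₂
  have hc₁pos : 0 < c₁ := div_pos hε₁pos hΔ
  have hc₂pos : 0 < c₂ := div_pos hε₂pos hΔ
  have hp₁' : ∀ z, p₁ z = c₁ / 2 * Real.exp (-(c₁ * |z|)) := by
    intro z
    rw [hp₁ z, show -(ε₁ * |z|) / Δ = -(ε₁ / Δ * |z|) from by ring,
      show ε₁ / (2 * Δ) = ε₁ / Δ / 2 from by ring]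
  have hp₂' : ∀ y, p₂ y = c₂ / 2 * Real.exp (-(c₂ * |y|)) := by
    intro y
    rw [hp₂ y, show -(ε₂ * |y|) / Δ = -(ε₂ / Δ * |y|) from by ring,
      show ε₂ / (2 * Δ) = ε₂ / Δ / 2 from by ring]
  have hp₁nonneg : ∀ z, 0 ≤ p₁ z := fun z => by rw [hp₁' z]; positivity
  have hp₂nonneg : ∀ y, 0 ≤ p₂ y := fun y => by rw [hp₂' y]; positivity
  have hint₁ : Integrable p₁ := by
    have h := (lap_integrable hc₁pos).const_mul (c₁ / 2)
    exact h.congr (ae_of_all _ fun z => (hp₁' z).symm)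
  have hint₂ : Integrable p₂ := by
    have h := (lap_integrable hc₂pos).const_mul (c₂ / 2)
    exact h.congr (ae_of_all _ fun y => (hp₂' y).symm)
  have hmass : ∫ y, p₂ y = 1 := by
    simp_rw [hp₂']
    rw [integral_const_mul, lap_integral hc₂pos]
    field_simp
  -- Φ₂ facts
  have hΦmono : Monotone Φ₂ := by
    intro s t hst
    rw [hΦ₂ s, hΦ₂ t]
    exact setIntegral_mono_set hint₂.integrableOn (ae_of_all _ hp₂nonneg)
      (HasSubset.Subset.eventuallyLE (Iic_subset_Iic.2 hst))
  have hΦnonneg : ∀ t, 0 ≤ Φ₂ t := fun t => by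
    rw [hΦ₂ t]; exact setIntegral_nonneg measurableSet_Iic fun y _ => hp₂nonneg y
  have hΦle : ∀ t, Φ₂ t ≤ 1 := fun t => by
    rw [hΦ₂ t, ← hmass]
    exact setIntegral_le_integral hint₂ (ae_of_all _ hp₂nonneg)
  have hsurv : ∀ t, 1 - Φ₂ t = ∫ y in Ioi t, p₂ y := by
    intro t
    have h := intervalIntegral.integral_Iic_add_Ioi (b := t) hint₂.integrableOn hint₂.integrableOn
    rw [hmass] at h
    rw [hΦ₂ t]
    linarith
  -- pointwise density shifts
  have hp₂shift : ∀ u c : ℝ, p₂ u ≤ Real.exp (c₂ * |c|) * p₂ (u + c) := by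
    intro u c
    rw [hp₂' u, hp₂' (u + c)]
    exact lap_shift hc₂pos (by positivity) u c
  have hp₁shift : ∀ z : ℝ, p₁ z ≤ Real.exp (ε / 2) * p₁ (z + Δ) := by
    intro z
    have h := lap_shift hc₁pos (le_of_lt (by positivity : (0:ℝ) < c₁ / 2)) z Δ
    rw [← hp₁' z, ← hp₁' (z + Δ)] at h
    have he : c₁ * |Δ| = ε / 2 := by
      rw [abs_of_pos hΔ, hc₁, hε₁]
      field_simp
    rwa [he] at h
  -- survival function shift
  have hIoi_shift : ∀ t c : ℝ, (∫ y in Ioi t, p₂ y) = ∫ y in Ioi (t + c), p₂ (y - c) := by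
    intro t c
    rw [← integral_indicator measurableSet_Ioi, ← integral_indicator measurableSet_Ioi,
      ← integral_sub_right_eq_self ((Ioi t).indicator p₂) c]
    congr 1
    funext y
    by_cases hy : t + c < y
    · rw [Set.indicator_of_mem (show y - c ∈ Ioi t by simp [Set.mem_Ioi]; linarith),
        Set.indicator_of_mem (show y ∈ Ioi (t + c) from hy)]
    · rw [Set.indicator_of_notMem (show y - c ∉ Ioi t by simp [Set.mem_Ioi] at hy ⊢; linarith),
        Set.indicator_of_notMem (show y ∉ Ioi (t + c) from hy)]
  have hSshift : ∀ t c : ℝ, (1 - Φ₂ t) ≤ Real.exp (c₂ * |c|) * (1 - Φ₂ (t + c)) := by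
    intro t c
    rw [hsurv t, hsurv (t + c), hIoi_shift t c, ← integral_const_mul]
    refine setIntegral_mono_on ((hint₂.comp_sub_right c).integrableOn)
      ((hint₂.const_mul _).integrableOn) measurableSet_Ioi ?_
    intro y _
    simpa using hp₂shift (y - c) c
  -- survival comparison with the e^{ε/2} factor
  have hScomp : ∀ (z : ℝ) (k : Fin K),
      1 - Φ₂ (z - a k) ≤ Real.exp (ε / 2) * (1 - Φ₂ (z + Δ - b k)) := by
    intro z k
    have h := hSshift (z - a k) (Δ + a k - b k)
    rw [show z - a k + (Δ + a k - b k) = z + Δ - b k from by ring] at h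
    refine h.trans (mul_le_mul_of_nonneg_right ?_ (by linarith [hΦle (z + Δ - b k)]))
    apply Real.exp_le_exp.2
    have habs : |Δ + (a k - b k)| ≤ 2 * Δ := by
      calc |Δ + (a k - b k)| ≤ |Δ| + |a k - b k| := abs_add_le _ _
      _ ≤ Δ + Δ := by rw [abs_of_pos hΔ]; linarith [hab k]
      _ = 2 * Δ := by ring
    calc c₂ * |Δ + a k - b k| ≤ c₂ * (2 * Δ) := by
          apply mul_le_mul_of_nonneg_left _ hc₂pos.le
          rw [show Δ + a k - b k = Δ + (a k - b k) from by ring]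
          exact habs
    _ = ε / 2 := by rw [hc₂, hε₂]; field_simp; ring
  -- measurability
  have hmeasΦ : Measurable Φ₂ := hΦmono.measurable
  have hmeas₁ : Measurable p₁ := by
    have : p₁ = fun z => c₁ / 2 * Real.exp (-(c₁ * |z|)) := funext hp₁'
    rw [this]; fun_prop
  have habΔ : ∀ (i : Fin K) (z : ℝ), z - a i ≤ z + Δ - b i := by
    intro i z
    have h := abs_le.1 (hab i)
    linarith [h.1]
  have hexp2 : Real.exp ε = Real.exp (ε / 2) * Real.exp (ε / 2) := by
    rw [← Real.exp_add]; norm_num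
  constructor
  · -- the P bounds
    intro k
    set A := Finset.univ.filter (fun i : Fin K => i < k) with hA
    set fa : ℝ → ℝ := fun z => (∏ i ∈ A, Φ₂ (z - a i)) * (1 - Φ₂ (z - a k)) * p₁ z with hfa
    set fb : ℝ → ℝ := fun z => (∏ i ∈ A, Φ₂ (z - b i)) * (1 - Φ₂ (z - b k)) * p₁ z with hfb
    have hfb_nonneg : ∀ z, 0 ≤ fb z := fun z =>
      mul_nonneg (mul_nonneg (Finset.prod_nonneg fun i _ => hΦnonneg _)
        (by linarith [hΦle (z - b k)])) (hp₁nonneg z)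
    have hfa_nonneg : ∀ z, 0 ≤ fa z := fun z =>
      mul_nonneg (mul_nonneg (Finset.prod_nonneg fun i _ => hΦnonneg _)
        (by linarith [hΦle (z - a k)])) (hp₁nonneg z)
    have hmeas_fb : Measurable fb := by
      apply Measurable.mul
      apply Measurable.mul
      · exact Finset.measurable_prod _ fun i _ => hmeasΦ.comp (measurable_id.sub_const (b i))
      · exact measurable_const.sub (hmeasΦ.comp (measurable_id.sub_const (b k)))
      · exact hmeas₁
    have hint_fb : Integrable fb := by
      refine hint₁.mono' hmeas_fb.aestronglyMeasurable (ae_of_all _ fun z => ?_)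
      rw [Real.norm_eq_abs, abs_of_nonneg (hfb_nonneg z)]
      have h1 : (∏ i ∈ A, Φ₂ (z - b i)) * (1 - Φ₂ (z - b k)) ≤ 1 :=
        mul_le_one₀ (Finset.prod_le_one (fun i _ => hΦnonneg _) (fun i _ => hΦle _))
          (by linarith [hΦle (z - b k)]) (by linarith [hΦnonneg (z - b k)])
      calc fb z ≤ 1 * p₁ z :=
            mul_le_mul_of_nonneg_right h1 (hp₁nonneg z)
      _ = p₁ z := one_mul _
    have key : ∀ z, fa z ≤ Real.exp ε * fb (z + Δ) := by
      intro z
      have hAle : (∏ i ∈ A, Φ₂ (z - a i)) ≤ ∏ i ∈ A, Φ₂ (z + Δ - b i) :=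
        Finset.prod_le_prod (fun i _ => hΦnonneg _) (fun i _ => hΦmono (habΔ i z))
      have hS := hScomp z k
      have hp := hp₁shift z
      have step1 : (∏ i ∈ A, Φ₂ (z - a i)) * (1 - Φ₂ (z - a k)) ≤
          (∏ i ∈ A, Φ₂ (z + Δ - b i)) * (Real.exp (ε / 2) * (1 - Φ₂ (z + Δ - b k))) :=
        mul_le_mul hAle hS (by linarith [hΦle (z - a k)])
          (Finset.prod_nonneg fun i _ => hΦnonneg _)
      have step2 : fa z ≤
          ((∏ i ∈ A, Φ₂ (z + Δ - b i)) * (Real.exp (ε / 2) * (1 - Φ₂ (z + Δ - b k)))) *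
            (Real.exp (ε / 2) * p₁ (z + Δ)) :=
        mul_le_mul step1 hp (hp₁nonneg z)
          (mul_nonneg (Finset.prod_nonneg fun i _ => hΦnonneg _)
            (mul_nonneg (Real.exp_pos _).le (by linarith [hΦle (z + Δ - b k)])))
      refine step2.trans_eq ?_
      show _ = Real.exp ε * ((∏ i ∈ A, Φ₂ (z + Δ - b i)) * (1 - Φ₂ (z + Δ - b k)) * p₁ (z + Δ))
      rw [hexp2]
      ring
    rw [hP k a, hP k b, ← hA]
    calc (∫ z : ℝ, fa z) ≤ ∫ z : ℝ, Real.exp ε * fb (z + Δ) :=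
          integral_mono_of_nonneg (ae_of_all _ hfa_nonneg)
            (((hint_fb.comp_add_right Δ)).const_mul _) (ae_of_all _ key)
    _ = Real.exp ε * ∫ z : ℝ, fb (z + Δ) := integral_const_mul _ _
    _ = Real.exp ε * ∫ z : ℝ, fb z := by rw [integral_add_right_eq_self]
  · -- the Q bound
    set ga : ℝ → ℝ := fun z => (∏ i : Fin K, Φ₂ (z - a i)) * p₁ z with hga
    set gb : ℝ → ℝ := fun z => (∏ i : Fin K, Φ₂ (z - b i)) * p₁ z with hgb
    have hga_nonneg : ∀ z, 0 ≤ ga z := fun z =>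
      mul_nonneg (Finset.prod_nonneg fun i _ => hΦnonneg _) (hp₁nonneg z)
    have hgb_nonneg : ∀ z, 0 ≤ gb z := fun z =>
      mul_nonneg (Finset.prod_nonneg fun i _ => hΦnonneg _) (hp₁nonneg z)
    have hmeas_gb : Measurable gb :=
      (Finset.measurable_prod _ fun i _ =>
        hmeasΦ.comp (measurable_id.sub_const (b i))).mul hmeas₁
    have hint_gb : Integrable gb := by
      refine hint₁.mono' hmeas_gb.aestronglyMeasurable (ae_of_all _ fun z => ?_)
      rw [Real.norm_eq_abs, abs_of_nonneg (hgb_nonneg z)]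
      calc gb z ≤ 1 * p₁ z :=
            mul_le_mul_of_nonneg_right
              (Finset.prod_le_one (fun i _ => hΦnonneg _) (fun i _ => hΦle _)) (hp₁nonneg z)
      _ = p₁ z := one_mul _
    have key : ∀ z, ga z ≤ Real.exp ε * gb (z + Δ) := by
      intro z
      have hAle : (∏ i : Fin K, Φ₂ (z - a i)) ≤ ∏ i : Fin K, Φ₂ (z + Δ - b i) :=
        Finset.prod_le_prod (fun i _ => hΦnonneg _) (fun i _ => hΦmono (habΔ i z))
      have hp := hp₁shift z
      have step : ga z ≤ (∏ i : Fin K, Φ₂ (z + Δ - b i)) * (Real.exp (ε / 2) * p₁ (z + Δ)) :=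
        mul_le_mul hAle hp (hp₁nonneg z) (Finset.prod_nonneg fun i _ => hΦnonneg _)
      refine step.trans ?_
      show _ ≤ Real.exp ε * ((∏ i : Fin K, Φ₂ (z + Δ - b i)) * p₁ (z + Δ))
      rw [show (∏ i : Fin K, Φ₂ (z + Δ - b i)) * (Real.exp (ε / 2) * p₁ (z + Δ)) =
          Real.exp (ε / 2) * ((∏ i : Fin K, Φ₂ (z + Δ - b i)) * p₁ (z + Δ)) from by ring]
      apply mul_le_mul_of_nonneg_right (Real.exp_le_exp.2 (by linarith))
      exact mul_nonneg (Finset.prod_nonneg fun i _ => hΦnonneg _) (hp₁nonneg _)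
    rw [hQ a, hQ b]
    calc (∫ z : ℝ, ga z) ≤ ∫ z : ℝ, Real.exp ε * gb (z + Δ) :=
          integral_mono_of_nonneg (ae_of_all _ hga_nonneg)
            (((hint_gb.comp_add_right Δ)).const_mul _) (ae_of_all _ key)
    _ = Real.exp ε * ∫ z : ℝ, gb (z + Δ) := integral_const_mul _ _
    _ = Real.exp ε * ∫ z : ℝ, gb z := by rw [integral_add_right_eq_self]
end

section
/- Let λ > 0, μ ≥ 0, and α > 1 be real numbers, and let Λ(x; m, λ) = (1/(2λ)) exp(−|x − m|/λ) denote the Laplace density with mean m and scale λ. Then ∫_ℝ Λ(x; 0, λ)^α · Λ(x; μ, λ)^{1−α} dx = (α/(2α − 1)) · exp(μ(α − 1)/λ) + ((α − 1)/(2α − 1)) · exp(−μα/λ). -/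
open MeasureTheory Real Set Filter Topology
set_option maxHeartbeats 1000000

lemma myIntOn_Iic (b c a : ℝ) (hb : 0 < b) :
    IntegrableOn (fun x : ℝ => exp (b * x + c)) (Iic a) := by
  have h0 : IntegrableOn (fun x : ℝ => exp (-b * x)) (Ioi (-a)) :=
    exp_neg_integrableOn_Ioi (-a) hb
  have h1 : IntegrableOn (fun x : ℝ => exp (-b * (-x))) ((fun x : ℝ => -x) ⁻¹' (Ioi (-a))) := by
    exact (MeasurePreserving.integrableOn_comp_preimage (Measure.measurePreserving_neg _)
      (Homeomorph.neg ℝ).measurableEmbedding).2 h0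
  have hset : ((fun x : ℝ => -x) ⁻¹' (Ioi (-a))) = Iio a := by
    ext x; simp
  rw [hset] at h1
  have h2 : IntegrableOn (fun x : ℝ => exp (b * x)) (Iio a) := by
    refine h1.congr_fun (fun x _ => by ring_nf) measurableSet_Iio
  have h3 : IntegrableOn (fun x : ℝ => exp c * exp (b * x)) (Iio a) := h2.const_mul _
  have h4 : IntegrableOn (fun x : ℝ => exp (b * x + c)) (Iio a) :=
    h3.congr_fun (fun x _ => by dsimp only; rw [← exp_add]; ring_nf) measurableSet_Iio
  rwa [integrableOn_Iic_iff_integrableOn_Iio]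

lemma myIntOn_Ioi (b c a : ℝ) (hb : 0 < b) :
    IntegrableOn (fun x : ℝ => exp (-(b * x) + c)) (Ioi a) := by
  have h0 : IntegrableOn (fun x : ℝ => exp (-b * x)) (Ioi a) :=
    exp_neg_integrableOn_Ioi a hb
  have h3 : IntegrableOn (fun x : ℝ => exp c * exp (-b * x)) (Ioi a) := h0.const_mul _
  exact h3.congr_fun (fun x _ => by dsimp only; rw [← exp_add]; ring_nf) measurableSet_Ioi

lemma myInt_Iic (b c a : ℝ) (hb : 0 < b) :
    ∫ x in Iic a, exp (b * x + c) = exp (b * a + c) / b := by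
  have hd : ∀ x ∈ Iic a, HasDerivAt (fun y : ℝ => exp (b * y + c) / b) (exp (b * x + c)) x := by
    intro x _
    have h1 : HasDerivAt (fun y : ℝ => b * y + c) b x := by
      simpa using ((hasDerivAt_id x).const_mul b).add_const c
    have h2 := (h1.exp).div_const b
    exact h2.congr_deriv (by field_simp)
  have htend : Tendsto (fun y : ℝ => exp (b * y + c) / b) atBot (𝓝 0) := by
    have h1 : Tendsto (fun y : ℝ => b * y + c) atBot atBot := by
      apply Filter.tendsto_atBot_add_const_right
      exact (tendsto_const_mul_atBot_of_pos hb).2 tendsto_id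
    have := (Real.tendsto_exp_atBot.comp h1).div_const b
    simpa using this
  have := integral_Iic_of_hasDerivAt_of_tendsto' hd (myIntOn_Iic b c a hb) htend
  rw [this]; ring

lemma myInt_Ioi (b c a : ℝ) (hb : 0 < b) :
    ∫ x in Ioi a, exp (-(b * x) + c) = exp (-(b * a) + c) / b := by
  have hd : ∀ x ∈ Ici a, HasDerivAt (fun y : ℝ => -(exp (-(b * y) + c) / b))
      (exp (-(b * x) + c)) x := by
    intro x _
    have h1 : HasDerivAt (fun y : ℝ => -(b * y) + c) (-b) x := by
      simpa using (((hasDerivAt_id x).const_mul b).neg).add_const c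
    have h2 := ((h1.exp).div_const b).neg
    exact h2.congr_deriv (by field_simp)
  have htend : Tendsto (fun y : ℝ => -(exp (-(b * y) + c) / b)) atTop (𝓝 0) := by
    have h1 : Tendsto (fun y : ℝ => -(b * y) + c) atTop atBot := by
      apply Filter.tendsto_atBot_add_const_right
      exact tendsto_neg_atBot_iff.2 ((tendsto_const_mul_atTop_of_pos hb).2 tendsto_id)
    have := ((Real.tendsto_exp_atBot.comp h1).div_const b).neg
    simpa using this
  have := integral_Ioi_of_hasDerivAt_of_tendsto' hd (myIntOn_Ioi b c a hb) htend
  rw [this]; ring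

lemma myInt_Ioc (d c a b : ℝ) (hd : d ≠ 0) (hab : a ≤ b) :
    ∫ x in Ioc a b, exp (d * x + c) = (exp (d * b + c) - exp (d * a + c)) / d := by
  rw [← intervalIntegral.integral_of_le hab]
  have hderiv : ∀ x ∈ uIcc a b, HasDerivAt (fun y : ℝ => exp (d * y + c) / d)
      (exp (d * x + c)) x := by
    intro x _
    have h1 : HasDerivAt (fun y : ℝ => d * y + c) d x := by
      simpa using ((hasDerivAt_id x).const_mul d).add_const c
    have h2 := (h1.exp).div_const d
    exact h2.congr_deriv (by field_simp)
  have hint : IntervalIntegrable (fun x : ℝ => exp (d * x + c)) volume a b := by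
    apply Continuous.intervalIntegrable
    continuity
  rw [intervalIntegral.integral_eq_sub_of_hasDerivAt hderiv hint]
  ring

/-- closed form of the α-th moment between two Laplace
densities with the same scale `lam` and means `0` and `μ`, used in the proof of
Theorem 2 of the paper:
`∫ Λ(x;0,lam)^α Λ(x;μ,lam)^{1−α} dx
  = α/(2α−1) · e^{μ(α−1)/lam} + (α−1)/(2α−1) · e^{−μα/lam}`. -/
theorem laplace_renyi_moment
    (lam μ α : ℝ) (hlam : 0 < lam) (hμ : 0 ≤ μ) (hα : 1 < α)
    (Λ : ℝ → ℝ → ℝ → ℝ)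
    (hΛ : ∀ x m l : ℝ, Λ x m l = 1 / (2 * l) * Real.exp (-|x - m| / l)) :
    (∫ x : ℝ, (Λ x 0 lam) ^ α * (Λ x μ lam) ^ (1 - α)) =
      α / (2 * α - 1) * Real.exp (μ * (α - 1) / lam) +
        (α - 1) / (2 * α - 1) * Real.exp (-(μ * α) / lam) := by
  have hlam' : lam ≠ 0 := ne_of_gt hlam
  have h2a : (0:ℝ) < 2 * α - 1 := by linarith
  have hb : (0:ℝ) < 1 / lam := by positivity
  set f : ℝ → ℝ := fun x => (-(|x| * α) - |x - μ| * (1 - α)) / lam with hf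
  have key : ∀ x : ℝ, (Λ x 0 lam) ^ α * (Λ x μ lam) ^ (1 - α)
      = 1 / (2 * lam) * exp (f x) := by
    intro x
    have hc : (0:ℝ) < 1 / (2 * lam) := by positivity
    rw [hΛ, hΛ, Real.mul_rpow hc.le (exp_pos _).le, Real.mul_rpow hc.le (exp_pos _).le,
      ← Real.exp_mul, ← Real.exp_mul, mul_mul_mul_comm, ← Real.rpow_add hc, ← Real.exp_add,
      show α + (1 - α) = 1 by ring, Real.rpow_one]
    congr 1
    rw [hf, sub_zero]
    field_simp
    ring
  rw [integral_congr_ae (Filter.Eventually.of_forall key), MeasureTheory.integral_const_mul]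
  have e1 : EqOn (fun x : ℝ => exp (f x))
      (fun x : ℝ => exp ((1/lam) * x + (α - 1) * μ / lam)) (Iic 0) := by
    intro x hx
    simp only [hf]
    rw [abs_of_nonpos hx, abs_of_nonpos (by simp only [mem_Iic] at hx; linarith : x - μ ≤ 0)]
    congr 1
    field_simp
    ring
  have e2 : EqOn (fun x : ℝ => exp (f x))
      (fun x : ℝ => exp (-((2 * α - 1) / lam) * x + (α - 1) * μ / lam)) (Ioc 0 μ) := by
    intro x hx
    simp only [hf]
    obtain ⟨hx1, hx2⟩ := hx
    rw [abs_of_nonneg hx1.le, abs_of_nonpos (by linarith : x - μ ≤ 0)]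
    congr 1
    field_simp
    ring
  have e3 : EqOn (fun x : ℝ => exp (f x))
      (fun x : ℝ => exp (-((1/lam) * x) + (-((α - 1) * μ / lam)))) (Ioi μ) := by
    intro x hx
    simp only [hf]
    simp only [mem_Ioi] at hx
    rw [abs_of_nonneg (by linarith : (0:ℝ) ≤ x), abs_of_nonneg (by linarith : (0:ℝ) ≤ x - μ)]
    congr 1
    field_simp
    ring
  have i1 : IntegrableOn (fun x : ℝ => exp (f x)) (Iic 0) :=
    (myIntOn_Iic (1/lam) ((α - 1) * μ / lam) 0 hb).congr_fun e1.symm measurableSet_Iic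
  have i2 : IntegrableOn (fun x : ℝ => exp (f x)) (Ioc 0 μ) := by
    apply Continuous.integrableOn_Ioc
    rw [hf]
    continuity
  have i3 : IntegrableOn (fun x : ℝ => exp (f x)) (Ioi μ) :=
    (myIntOn_Ioi (1/lam) (-((α - 1) * μ / lam)) μ hb).congr_fun e3.symm measurableSet_Ioi
  have i23 : IntegrableOn (fun x : ℝ => exp (f x)) (Ioi 0) := by
    rw [← Ioc_union_Ioi_eq_Ioi hμ]
    exact i2.union i3
  have split1 : (∫ x : ℝ, exp (f x))
      = (∫ x in Iic 0, exp (f x)) + ∫ x in Ioi 0, exp (f x) :=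
    (intervalIntegral.integral_Iic_add_Ioi i1 i23).symm
  have split2 : (∫ x in Ioi (0:ℝ), exp (f x))
      = (∫ x in Ioc 0 μ, exp (f x)) + ∫ x in Ioi μ, exp (f x) := by
    rw [← Ioc_union_Ioi_eq_Ioi hμ,
      setIntegral_union (Ioc_disjoint_Ioi le_rfl) measurableSet_Ioi i2 i3]
  have v1 : (∫ x in Iic (0:ℝ), exp (f x)) = lam * exp (μ * (α - 1) / lam) := by
    rw [setIntegral_congr_fun measurableSet_Iic e1, myInt_Iic _ _ _ hb,
      show (1/lam) * 0 + (α - 1) * μ / lam = μ * (α - 1) / lam by ring, div_eq_mul_inv,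
      one_div, inv_inv, mul_comm]
  have hd0 : -((2 * α - 1) / lam) ≠ 0 := by
    have h' : (0:ℝ) < (2 * α - 1) / lam := by positivity
    intro h; rw [neg_eq_zero] at h; linarith
  have v2 : (∫ x in Ioc (0:ℝ) μ, exp (f x))
      = lam / (2 * α - 1) * (exp (μ * (α - 1) / lam) - exp (-(μ * α) / lam)) := by
    rw [setIntegral_congr_fun measurableSet_Ioc e2, myInt_Ioc _ _ _ _ hd0 hμ,
      show -((2 * α - 1) / lam) * μ + (α - 1) * μ / lam = -(μ * α) / lam by field_simp; ring,
      show -((2 * α - 1) / lam) * 0 + (α - 1) * μ / lam = μ * (α - 1) / lam by ring]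
    have h2a' : (2 * α - 1) ≠ 0 := ne_of_gt h2a
    have key2 : ∀ X Y : ℝ, (Y - X) / (-((2 * α - 1) / lam)) = lam / (2 * α - 1) * (X - Y) := by
      intro X Y
      rw [div_neg]
      field_simp
      ring
    exact key2 _ _
  have v3 : (∫ x in Ioi μ, exp (f x)) = lam * exp (-(μ * α) / lam) := by
    rw [setIntegral_congr_fun measurableSet_Ioi e3, myInt_Ioi _ _ _ hb,
      show -((1/lam) * μ) + -((α - 1) * μ / lam) = -(μ * α) / lam by field_simp; ring,
      div_eq_mul_inv, one_div, inv_inv, mul_comm]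
  rw [split1, split2, v1, v2, v3]
  field_simp
  ring
end

section
/- Let σ > 0, μ ∈ ℝ, and α > 1 be real numbers, and let f(x; m, σ²) = (1/√(2πσ²)) exp(−(x − m)²/(2σ²)) denote the Gaussian density with mean m and variance σ². Then ∫_ℝ f(x; 0, σ²)^α · f(x; μ, σ²)^{1−α} dx = exp( α(α − 1) μ² / (2σ²) ). -/
open MeasureTheory Real

/-- closed form of the α-th moment between two Gaussian
densities with the same variance `σ²` and means `0` and `μ`, used in the proof
of Theorem 3 of the paper:
`∫ f(x;0,σ²)^α f(x;μ,σ²)^{1−α} dx = exp(α(α−1)μ²/(2σ²))`. -/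
theorem gaussian_renyi_moment
    (σ μ α : ℝ) (hσ : 0 < σ) (hα : 1 < α)
    (f : ℝ → ℝ → ℝ → ℝ)
    (hf : ∀ x m v : ℝ,
      f x m v = 1 / Real.sqrt (2 * Real.pi * v) * Real.exp (-(x - m) ^ 2 / (2 * v))) :
    (∫ x : ℝ, (f x 0 (σ ^ 2)) ^ α * (f x μ (σ ^ 2)) ^ (1 - α)) =
      Real.exp (α * (α - 1) * μ ^ 2 / (2 * σ ^ 2)) := by
  set v : ℝ := σ ^ 2 with hv
  have hv0 : 0 < v := by positivity
  have h2v : 0 < 2 * π * v := by positivity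
  have hs : 0 < Real.sqrt (2 * π * v) := Real.sqrt_pos.mpr h2v
  set a : ℝ := 1 / Real.sqrt (2 * π * v) with ha
  have ha0 : 0 < a := by positivity
  set m : ℝ := (1 - α) * μ with hm
  set K : ℝ := α * (α - 1) * μ ^ 2 / (2 * v) with hK
  have key : ∀ x : ℝ,
      (f x 0 v) ^ α * (f x μ v) ^ (1 - α)
        = Real.exp K * (a * Real.exp (-(x - m) ^ 2 / (2 * v))) := by
    intro x
    rw [hf, hf]
    rw [Real.mul_rpow ha0.le (Real.exp_pos _).le,
        Real.mul_rpow ha0.le (Real.exp_pos _).le,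
        ← Real.exp_mul, ← Real.exp_mul]
    have haa : a ^ α * a ^ (1 - α) = a := by
      rw [← Real.rpow_add ha0]
      norm_num
    have hexp : Real.exp (-(x - 0) ^ 2 / (2 * v) * α) *
        Real.exp (-(x - μ) ^ 2 / (2 * v) * (1 - α))
        = Real.exp K * Real.exp (-(x - m) ^ 2 / (2 * v)) := by
      rw [← Real.exp_add, ← Real.exp_add]
      congr 1
      rw [hK, hm, div_mul_eq_mul_div, div_mul_eq_mul_div, ← add_div,
        ← add_div]
      congr 1
      ring
    calc a ^ α * Real.exp (-(x - 0) ^ 2 / (2 * v) * α) *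
          (a ^ (1 - α) * Real.exp (-(x - μ) ^ 2 / (2 * v) * (1 - α)))
        = (a ^ α * a ^ (1 - α)) * (Real.exp (-(x - 0) ^ 2 / (2 * v) * α) *
            Real.exp (-(x - μ) ^ 2 / (2 * v) * (1 - α))) := by ring
      _ = a * (Real.exp K * Real.exp (-(x - m) ^ 2 / (2 * v))) := by rw [haa, hexp]
      _ = Real.exp K * (a * Real.exp (-(x - m) ^ 2 / (2 * v))) := by ring
  simp only [key]
  rw [MeasureTheory.integral_const_mul, MeasureTheory.integral_const_mul]
  have hint : (∫ x : ℝ, Real.exp (-(x - m) ^ 2 / (2 * v))) = Real.sqrt (2 * π * v) := by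
    rw [integral_sub_right_eq_self (fun x => Real.exp (-x ^ 2 / (2 * v))) m]
    have : ∀ x : ℝ, Real.exp (-x ^ 2 / (2 * v)) = Real.exp (-(1 / (2 * v)) * x ^ 2) := by
      intro x; congr 1; field_simp
    simp only [this]
    rw [integral_gaussian]
    congr 1
    field_simp
  rw [hint]
  have : a * Real.sqrt (2 * π * v) = 1 := by
    rw [ha]; field_simp
  rw [this, mul_one]
end

section
/- Fix K ∈ ℕ, Δ > 0, σ₁ > 0, σ₂ > 0, and a real α > 1. Let the threshold noise density be p₁(z) = f(z; 0, Δ²σ₁²) and the query noise density be p₂(y) = f(y; 0, Δ²σ₂²), where f(x; m, σ²) is the Gaussian density with mean m and variance σ², and let Φ₂(t) = ∫_{−∞}^t p₂(u) du. For a query vector a ∈ ℝ^K define P_k(a) = ∫_ℝ (∏_{i=1}^{k−1} Φ₂(z − a_i)) (1 − Φ₂(z − a_k)) p₁(z) dz. Then for any a, b ∈ ℝ^K with |a_i − b_i| ≤ Δ for all i, and for every k ∈ {1, …, K}: P_k(a)^α · P_k(b)^{1−α} ≤ exp( α(α − 1)(4σ₁² + σ₂²) / (2σ₁²σ₂²)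 ). Equivalently, (1/(α−1)) log( P_k(a)^α P_k(b)^{1−α} ) ≤ α(4σ₁² + σ₂²)/(2σ₁²σ₂²). -/
open MeasureTheory Real ProbabilityTheory
open scoped NNReal

lemma aux_revHolder {μ : Measure ℝ} (hμ : μ ≠ 0) {α : ℝ} (hα : 1 < α)
    {f g : ℝ → ℝ} (hfm : Measurable f) (hgm : Measurable g)
    (hf0 : ∀ x, 0 ≤ f x) (hg0 : ∀ x, 0 < g x)
    (hfi : Integrable f μ) (hgi : Integrable g μ)
    (hfg : Integrable (fun x => f x ^ α * g x ^ (1 - α)) μ) :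
    (∫ x, f x ∂μ) ^ α * (∫ x, g x ∂μ) ^ (1 - α) ≤ ∫ x, f x ^ α * g x ^ (1 - α) ∂μ := by
  have hα0 : (0:ℝ) < α := lt_trans one_pos hα
  have hα1 : α - 1 ≠ 0 := sub_ne_zero.2 hα.ne'
  have hpq : Real.HolderConjugate α (α / (α - 1)) := Real.HolderConjugate.conjExponent hα
  set F : ℝ → ENNReal := fun x => ENNReal.ofReal (f x) with hF
  set G : ℝ → ENNReal := fun x => ENNReal.ofReal (g x) with hG
  have hGne : ∀ x, G x ≠ 0 := fun x => (ENNReal.ofReal_pos.2 (hg0 x)).ne'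
  have hGnt : ∀ x, G x ≠ ⊤ := fun x => ENNReal.ofReal_ne_top
  have hu : AEMeasurable (fun x => F x * G x ^ ((1 - α) / α)) μ :=
    ((hfm.ennreal_ofReal).mul ((hgm.ennreal_ofReal).pow_const _)).aemeasurable
  have hv : AEMeasurable (fun x => G x ^ ((α - 1) / α)) μ :=
    ((hgm.ennreal_ofReal).pow_const _).aemeasurable
  have holder := ENNReal.lintegral_mul_le_Lp_mul_Lq μ hpq hu hv
  have hprod : ∀ x, (F x * G x ^ ((1 - α) / α)) * G x ^ ((α - 1) / α) = F x := by
    intro x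
    rw [mul_assoc, ← ENNReal.rpow_add _ _ (hGne x) (hGnt x)]
    have : (1 - α) / α + (α - 1) / α = 0 := by ring
    rw [this, ENNReal.rpow_zero, mul_one]
  have hpow : ∀ x, (F x * G x ^ ((1 - α) / α)) ^ α = F x ^ α * G x ^ (1 - α) := by
    intro x
    rw [ENNReal.mul_rpow_of_nonneg _ _ hα0.le, ← ENNReal.rpow_mul]
    congr 1
    field_simp
  have hqow : ∀ x, (G x ^ ((α - 1) / α)) ^ (α / (α - 1)) = G x := by
    intro x
    rw [← ENNReal.rpow_mul]
    have : (α - 1) / α * (α / (α - 1)) = 1 := by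
      field_simp
    rw [this, ENNReal.rpow_one]
  simp only [Pi.mul_apply, hprod, hpow, hqow] at holder
  -- identify lintegrals with ofReal of integrals
  have hFG_eq : ∀ x, F x ^ α * G x ^ (1 - α) = ENNReal.ofReal (f x ^ α * g x ^ (1 - α)) := by
    intro x
    rw [ENNReal.ofReal_mul (Real.rpow_nonneg (hf0 x) α),
      ← ENNReal.ofReal_rpow_of_nonneg (hf0 x) hα0.le,
      ← ENNReal.ofReal_rpow_of_pos (hg0 x)]
  have hR : (∫⁻ x, F x ^ α * G x ^ (1 - α) ∂μ)
      = ENNReal.ofReal (∫ x, f x ^ α * g x ^ (1 - α) ∂μ) := by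
    simp only [hFG_eq]
    rw [← ofReal_integral_eq_lintegral_ofReal hfg]
    exact Filter.Eventually.of_forall fun x =>
      mul_nonneg (Real.rpow_nonneg (hf0 x) α) (Real.rpow_nonneg (hg0 x).le _)
  have hIf : (∫⁻ x, F x ∂μ) = ENNReal.ofReal (∫ x, f x ∂μ) :=
    (ofReal_integral_eq_lintegral_ofReal hfi
      (Filter.Eventually.of_forall hf0)).symm
  have hIg : (∫⁻ x, G x ∂μ) = ENNReal.ofReal (∫ x, g x ∂μ) :=
    (ofReal_integral_eq_lintegral_ofReal hgi
      (Filter.Eventually.of_forall fun x => (hg0 x).le)).symm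
  rw [hR, hIf, hIg] at holder
  -- transfer to real
  set I := ∫ x, f x ∂μ with hI
  set J := ∫ x, g x ∂μ with hJ
  set R := ∫ x, f x ^ α * g x ^ (1 - α) ∂μ with hRdef
  have hI0 : 0 ≤ I := integral_nonneg hf0
  have hJ0 : 0 < J := by
    rw [hJ, integral_pos_iff_support_of_nonneg (fun x => (hg0 x).le) hgi]
    have : Function.support g = Set.univ := by
      ext x; simp [Function.support, (hg0 x).ne']
    rw [this]
    simpa [Measure.measure_univ_pos] using hμ
  have hR0 : 0 ≤ R := integral_nonneg fun x =>
    mul_nonneg (Real.rpow_nonneg (hf0 x) α) (Real.rpow_nonneg (hg0 x).le _)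
  have hreal : I ≤ R ^ (1/α) * J ^ ((α-1)/α) := by
    have h2 := ENNReal.toReal_mono ?_ holder
    · rw [ENNReal.toReal_ofReal hI0, ENNReal.toReal_mul, ← ENNReal.toReal_rpow,
        ← ENNReal.toReal_rpow, ENNReal.toReal_ofReal hR0, ENNReal.toReal_ofReal hJ0.le] at h2
      have : 1 / (α / (α - 1)) = (α - 1) / α := by field_simp
      rwa [this] at h2
    · have e1 : (0:ℝ) ≤ 1 / α := by positivity
      have e2 : (0:ℝ) ≤ 1 / (α / (α - 1)) := le_of_lt hpq.symm.one_div_pos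
      exact ENNReal.mul_ne_top (ENNReal.rpow_ne_top_of_nonneg e1 ENNReal.ofReal_ne_top)
        (ENNReal.rpow_ne_top_of_nonneg e2 ENNReal.ofReal_ne_top)
  -- raise to power α
  have h3 : I ^ α ≤ R * J ^ (α - 1) := by
    calc I ^ α ≤ (R ^ (1/α) * J ^ ((α-1)/α)) ^ α :=
          Real.rpow_le_rpow hI0 hreal hα0.le
      _ = R * J ^ (α - 1) := by
          rw [Real.mul_rpow (Real.rpow_nonneg hR0 _) (Real.rpow_nonneg hJ0.le _),
            ← Real.rpow_mul hR0, ← Real.rpow_mul hJ0.le,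
            one_div_mul_cancel hα0.ne', div_mul_cancel₀ _ hα0.ne', Real.rpow_one]
  calc I ^ α * J ^ (1 - α) ≤ (R * J ^ (α - 1)) * J ^ (1 - α) := by
        apply mul_le_mul_of_nonneg_right h3 (Real.rpow_nonneg hJ0.le _)
    _ = R := by
        rw [mul_assoc, ← Real.rpow_add hJ0]
        norm_num

lemma aux_gaussRenyi {v : ℝ≥0} (hv : 0 < (v:ℝ)) (α m m' u : ℝ) :
    gaussianPDFReal m v u ^ α * gaussianPDFReal m' v u ^ (1 - α)
      = Real.exp (α * (α - 1) * (m - m') ^ 2 / (2 * v)) *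
        gaussianPDFReal (α * m + (1 - α) * m') v u := by
  simp only [gaussianPDFReal]
  have hc : (0:ℝ) < (Real.sqrt (2 * Real.pi * v))⁻¹ := by
    rw [inv_pos]
    apply Real.sqrt_pos.2
    positivity
  rw [Real.mul_rpow hc.le (Real.exp_nonneg _), Real.mul_rpow hc.le (Real.exp_nonneg _),
    ← Real.exp_mul, ← Real.exp_mul]
  have hcc : (Real.sqrt (2 * Real.pi * v))⁻¹ ^ α * (Real.sqrt (2 * Real.pi * v))⁻¹ ^ (1 - α)
      = (Real.sqrt (2 * Real.pi * v))⁻¹ := by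
    rw [← Real.rpow_add hc]
    norm_num
  calc (Real.sqrt (2 * Real.pi * ↑v))⁻¹ ^ α * Real.exp (-(u - m) ^ 2 / (2 * ↑v) * α) *
        ((Real.sqrt (2 * Real.pi * ↑v))⁻¹ ^ (1 - α) * Real.exp (-(u - m') ^ 2 / (2 * ↑v) * (1 - α)))
      = ((Real.sqrt (2 * Real.pi * ↑v))⁻¹ ^ α * (Real.sqrt (2 * Real.pi * ↑v))⁻¹ ^ (1 - α)) *
        (Real.exp (-(u - m) ^ 2 / (2 * ↑v) * α) * Real.exp (-(u - m') ^ 2 / (2 * ↑v) * (1 - α))) := by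
        ring
    _ = (Real.sqrt (2 * Real.pi * ↑v))⁻¹ *
        Real.exp (-(u - m) ^ 2 / (2 * ↑v) * α + -(u - m') ^ 2 / (2 * ↑v) * (1 - α)) := by
        rw [hcc, ← Real.exp_add]
    _ = Real.exp (α * (α - 1) * (m - m') ^ 2 / (2 * ↑v)) *
        ((Real.sqrt (2 * Real.pi * ↑v))⁻¹ *
          Real.exp (-(u - (α * m + (1 - α) * m')) ^ 2 / (2 * ↑v))) := by
        have h : -(u - m) ^ 2 / (2 * (v:ℝ)) * α + -(u - m') ^ 2 / (2 * (v:ℝ)) * (1 - α)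
            = α * (α - 1) * (m - m') ^ 2 / (2 * (v:ℝ))
              + -(u - (α * m + (1 - α) * m')) ^ 2 / (2 * (v:ℝ)) := by
          have hvne : (v:ℝ) ≠ 0 := hv.ne'
          field_simp
          ring
        rw [h, Real.exp_add]
        ring

lemma aux_shift_setIntegral (f : ℝ → ℝ) (c t : ℝ) :
    (∫ u in Set.Ioi t, f (u - c)) = ∫ u in Set.Ioi (t - c), f u := by
  rw [← integral_indicator measurableSet_Ioi, ← integral_indicator measurableSet_Ioi]
  have h : (Set.Ioi t).indicator (fun u => f (u - c))
      = fun u => (Set.Ioi (t - c)).indicator f (u - c) := by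
    funext u
    by_cases hu : t < u
    · simp [Set.indicator_apply, hu, sub_lt_sub_iff_right, Set.mem_Ioi]
    · simp [Set.indicator_apply, hu, sub_lt_sub_iff_right, Set.mem_Ioi]
  rw [h, integral_sub_right_eq_self]

lemma aux_tail {v : ℝ≥0} (hv : 0 < (v:ℝ)) {α : ℝ} (hα : 1 < α) (c t : ℝ) :
    (∫ u in Set.Ioi (t - c), gaussianPDFReal 0 v u) ^ α *
      (∫ u in Set.Ioi t, gaussianPDFReal 0 v u) ^ (1 - α)
      ≤ Real.exp (α * (α - 1) * c ^ 2 / (2 * v)) := by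
  have hvne : v ≠ 0 := by
    intro h; rw [h] at hv; simp at hv
  have hshift : (fun u => gaussianPDFReal 0 v (u - c)) = gaussianPDFReal c v := by
    funext u; rw [gaussianPDFReal_sub, zero_add]
  have h1 : (∫ u in Set.Ioi (t - c), gaussianPDFReal 0 v u)
      = ∫ u in Set.Ioi t, gaussianPDFReal c v u := by
    rw [← aux_shift_setIntegral (gaussianPDFReal 0 v) c t]
    simp_rw [gaussianPDFReal_sub, zero_add]
  set K := Real.exp (α * (α - 1) * c ^ 2 / (2 * v)) with hK
  have hptw : ∀ x : ℝ, gaussianPDFReal c v x ^ α * gaussianPDFReal 0 v x ^ (1 - α)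
      = K * gaussianPDFReal (α * c) v x := by
    intro x
    rw [aux_gaussRenyi hv]
    norm_num [hK]
  have hμ : volume.restrict (Set.Ioi t) ≠ 0 := by
    rw [Ne, Measure.restrict_eq_zero, Real.volume_Ioi]
    exact ENNReal.top_ne_zero
  have step := aux_revHolder hμ hα (measurable_gaussianPDFReal c v)
    (measurable_gaussianPDFReal 0 v) (gaussianPDFReal_nonneg c v)
    (fun x => gaussianPDFReal_pos 0 v x hvne)
    ((integrable_gaussianPDFReal c v).restrict)
    ((integrable_gaussianPDFReal 0 v).restrict)
    (by
      have : (fun x => gaussianPDFReal c v x ^ α * gaussianPDFReal 0 v x ^ (1 - α))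
          = fun x => K * gaussianPDFReal (α * c) v x := funext hptw
      rw [this]
      exact ((integrable_gaussianPDFReal (α * c) v).const_mul K).restrict)
  rw [h1]
  refine le_trans step ?_
  calc (∫ x in Set.Ioi t, gaussianPDFReal c v x ^ α * gaussianPDFReal 0 v x ^ (1 - α))
      = K * ∫ x in Set.Ioi t, gaussianPDFReal (α * c) v x := by
        simp_rw [hptw]; rw [MeasureTheory.integral_const_mul]
    _ ≤ K * 1 := by
        apply mul_le_mul_of_nonneg_left _ (Real.exp_nonneg _)
        rw [← integral_gaussianPDFReal_eq_one (α * c) hvne]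
        exact setIntegral_le_integral (integrable_gaussianPDFReal _ _)
          (Filter.Eventually.of_forall (gaussianPDFReal_nonneg _ _))
    _ = K := mul_one K

/-- RDP bound for the Gaussian version of Noisy Backtracking
Line Search, Theorem 3 of the paper. With threshold-noise density
`p₁ = N(0, Δ²σ₁²)` and query-noise density `p₂ = N(0, Δ²σ₂²)`, for query
vectors `a, b` with `|a i − b i| ≤ Δ` coordinatewise and every output index `k`,
`P k a ^ α · P k b ^ (1−α) ≤ exp(α(α−1)(4σ₁² + σ₂²)/(2σ₁²σ₂²))`. -/
theorem noisyBTLS_gaussian_RDP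
    (K : ℕ) (Δ σ₁ σ₂ α : ℝ) (hΔ : 0 < Δ) (hσ₁ : 0 < σ₁) (hσ₂ : 0 < σ₂) (hα : 1 < α)
    (gauss : ℝ → ℝ → ℝ → ℝ)
    (hgauss : ∀ x m v : ℝ,
      gauss x m v = 1 / Real.sqrt (2 * Real.pi * v) * Real.exp (-(x - m) ^ 2 / (2 * v)))
    (p₁ p₂ : ℝ → ℝ)
    (hp₁ : ∀ z : ℝ, p₁ z = gauss z 0 (Δ ^ 2 * σ₁ ^ 2))
    (hp₂ : ∀ y : ℝ, p₂ y = gauss y 0 (Δ ^ 2 * σ₂ ^ 2))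
    (Φ₂ : ℝ → ℝ) (hΦ₂ : ∀ t : ℝ, Φ₂ t = ∫ u in Set.Iic t, p₂ u)
    (P : Fin K → (Fin K → ℝ) → ℝ)
    (hP : ∀ (k : Fin K) (a : Fin K → ℝ),
      P k a = ∫ z : ℝ,
        (∏ i ∈ Finset.univ.filter (fun i : Fin K => i < k), Φ₂ (z - a i)) *
          (1 - Φ₂ (z - a k)) * p₁ z)
    (a b : Fin K → ℝ) (hab : ∀ i : Fin K, |a i - b i| ≤ Δ) :
    ∀ k : Fin K,
      P k a ^ α * P k b ^ (1 - α) ≤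
        Real.exp (α * (α - 1) * (4 * σ₁ ^ 2 + σ₂ ^ 2) / (2 * σ₁ ^ 2 * σ₂ ^ 2)) := by
  intro k
  have hα0 : (0:ℝ) < α := lt_trans one_pos hα
  set v₁ : ℝ≥0 := ⟨Δ ^ 2 * σ₁ ^ 2, by positivity⟩ with hv₁def
  set v₂ : ℝ≥0 := ⟨Δ ^ 2 * σ₂ ^ 2, by positivity⟩ with hv₂def
  have hv₁c : (v₁ : ℝ) = Δ ^ 2 * σ₁ ^ 2 := rfl
  have hv₂c : (v₂ : ℝ) = Δ ^ 2 * σ₂ ^ 2 := rfl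
  have hv₁ : (0:ℝ) < v₁ := by rw [hv₁c]; positivity
  have hv₂ : (0:ℝ) < v₂ := by rw [hv₂c]; positivity
  have hv₁ne : v₁ ≠ 0 := by intro h; rw [h] at hv₁; simp at hv₁
  have hv₂ne : v₂ ≠ 0 := by intro h; rw [h] at hv₂; simp at hv₂
  have hp₁g : p₁ = gaussianPDFReal 0 v₁ := by
    funext z; rw [hp₁, hgauss]
    simp [gaussianPDFReal, one_div, hv₁c]
  have hp₂g : p₂ = gaussianPDFReal 0 v₂ := by
    funext z; rw [hp₂, hgauss]
    simp [gaussianPDFReal, one_div, hv₂c]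
  have hp₂int : Integrable p₂ := hp₂g ▸ integrable_gaussianPDFReal 0 v₂
  have hp₂nn : ∀ y, 0 ≤ p₂ y := fun y => hp₂g ▸ gaussianPDFReal_nonneg 0 v₂ y
  have hp₂pos : ∀ y, 0 < p₂ y := fun y => hp₂g ▸ gaussianPDFReal_pos 0 v₂ y hv₂ne
  have hp₂tot : (∫ y, p₂ y) = 1 := by
    rw [hp₂g]; exact integral_gaussianPDFReal_eq_one 0 hv₂ne
  -- basic properties of Φ₂
  have hΦmono : Monotone Φ₂ := by
    intro s t hst
    rw [hΦ₂, hΦ₂]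
    exact setIntegral_mono_set hp₂int.integrableOn
      (Filter.Eventually.of_forall hp₂nn) ((Set.Iic_subset_Iic.2 hst).eventuallyLE)
  have hΦmeas : Measurable Φ₂ := hΦmono.measurable
  have hΦnn : ∀ t, 0 ≤ Φ₂ t := fun t => by
    rw [hΦ₂]; exact setIntegral_nonneg measurableSet_Iic fun x _ => hp₂nn x
  have hΦle1 : ∀ t, Φ₂ t ≤ 1 := fun t => by
    rw [hΦ₂, ← hp₂tot]
    exact setIntegral_le_integral hp₂int (Filter.Eventually.of_forall hp₂nn)
  have hΨeq : ∀ t, 1 - Φ₂ t = ∫ u in Set.Ioi t, p₂ u := by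
    intro t
    have h := integral_add_compl (measurableSet_Iic (a := t)) hp₂int
    rw [Set.compl_Iic, hp₂tot] at h
    rw [hΦ₂]
    linarith
  have hΦpos : ∀ t, 0 < Φ₂ t := by
    intro t
    rw [hΦ₂]
    rw [setIntegral_pos_iff_support_of_nonneg_ae
      (Filter.Eventually.of_forall hp₂nn) hp₂int.integrableOn]
    have hs : Function.support p₂ = Set.univ := by
      ext x; simp [Function.support, (hp₂pos x).ne']
    rw [hs, Set.univ_inter, Real.volume_Iic]
    exact ENNReal.zero_lt_top
  have hΨpos : ∀ t, 0 < 1 - Φ₂ t := by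
    intro t
    rw [hΨeq]
    rw [setIntegral_pos_iff_support_of_nonneg_ae
      (Filter.Eventually.of_forall hp₂nn) hp₂int.integrableOn]
    have hs : Function.support p₂ = Set.univ := by
      ext x; simp [Function.support, (hp₂pos x).ne']
    rw [hs, Set.univ_inter, Real.volume_Ioi]
    exact ENNReal.zero_lt_top
  have hΨle1 : ∀ t, 1 - Φ₂ t ≤ 1 := fun t => by
    have := hΦnn t; linarith
  -- the product term
  set s : Finset (Fin K) := Finset.univ.filter (fun i : Fin K => i < k) with hs_def
  set C : ℝ → ℝ := fun w => ∏ i ∈ s, Φ₂ (w - b i) with hC_def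
  have hC_meas : Measurable C := by
    apply Finset.measurable_prod
    intro i _
    exact hΦmeas.comp (measurable_id.sub_const _)
  have hC_pos : ∀ w, 0 < C w := fun w =>
    Finset.prod_pos fun i _ => hΦpos _
  have hC_le1 : ∀ w, C w ≤ 1 := fun w =>
    Finset.prod_le_one (fun i _ => hΦnn _) (fun i _ => hΦle1 _)
  -- neighbor facts
  have hba : ∀ i, b i ≤ a i + Δ := fun i => by
    have := (abs_le.1 (hab i)).1; linarith
  have hab' : ∀ i, a i ≤ b i + Δ := fun i => by
    have := (abs_le.1 (hab i)).2; linarith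
  -- the two key densities
  have hp₁shift : ∀ w : ℝ, p₁ (w - Δ) = gaussianPDFReal Δ v₁ w := fun w => by
    rw [hp₁g, gaussianPDFReal_sub, zero_add]
  -- f and g
  set f : ℝ → ℝ := fun w => C w * (1 - Φ₂ (w - Δ - a k)) * gaussianPDFReal Δ v₁ w with hf_def
  set g : ℝ → ℝ := fun w => C w * (1 - Φ₂ (w - b k)) * gaussianPDFReal 0 v₁ w with hg_def
  have hf_meas : Measurable f :=
    (hC_meas.mul ((measurable_const.sub
      (hΦmeas.comp ((measurable_id.sub_const Δ).sub_const (a k)))))).mul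
      (measurable_gaussianPDFReal Δ v₁)
  have hg_meas : Measurable g :=
    (hC_meas.mul ((measurable_const.sub
      (hΦmeas.comp (measurable_id.sub_const (b k)))))).mul
      (measurable_gaussianPDFReal 0 v₁)
  have hf_nn : ∀ w, 0 ≤ f w := fun w =>
    mul_nonneg (mul_nonneg (hC_pos w).le (hΨpos _).le) (gaussianPDFReal_nonneg _ _ _)
  have hg_pos : ∀ w, 0 < g w := fun w =>
    mul_pos (mul_pos (hC_pos w) (hΨpos _)) (gaussianPDFReal_pos _ _ _ hv₁ne)
  have hf_le : ∀ w, f w ≤ gaussianPDFReal Δ v₁ w := fun w => by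
    have h1 : C w * (1 - Φ₂ (w - Δ - a k)) ≤ 1 :=
      mul_le_one₀ (hC_le1 w) (hΨpos _).le (hΨle1 _)
    calc f w ≤ 1 * gaussianPDFReal Δ v₁ w :=
          mul_le_mul_of_nonneg_right h1 (gaussianPDFReal_nonneg _ _ _)
      _ = gaussianPDFReal Δ v₁ w := one_mul _
  have hg_le : ∀ w, g w ≤ gaussianPDFReal 0 v₁ w := fun w => by
    have h1 : C w * (1 - Φ₂ (w - b k)) ≤ 1 :=
      mul_le_one₀ (hC_le1 w) (hΨpos _).le (hΨle1 _)
    calc g w ≤ 1 * gaussianPDFReal 0 v₁ w :=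
          mul_le_mul_of_nonneg_right h1 (gaussianPDFReal_nonneg _ _ _)
      _ = gaussianPDFReal 0 v₁ w := one_mul _
  have hf_int : Integrable f :=
    (integrable_gaussianPDFReal Δ v₁).mono' hf_meas.aestronglyMeasurable
      (Filter.Eventually.of_forall fun w => by
        rw [Real.norm_eq_abs, abs_of_nonneg (hf_nn w)]; exact hf_le w)
  have hg_int : Integrable g :=
    (integrable_gaussianPDFReal 0 v₁).mono' hg_meas.aestronglyMeasurable
      (Filter.Eventually.of_forall fun w => by
        rw [Real.norm_eq_abs, abs_of_nonneg (hg_pos w).le]; exact hg_le w)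
  -- the constants
  set K₁ := Real.exp (α * (α - 1) * Δ ^ 2 / (2 * v₁)) with hK₁def
  set K₂ := Real.exp (α * (α - 1) * (2*Δ) ^ 2 / (2 * v₂)) with hK₂def
  -- pointwise bound on f^α g^(1-α)
  have hptw : ∀ w, f w ^ α * g w ^ (1 - α)
      ≤ (K₂ * K₁) * gaussianPDFReal (α * Δ) v₁ w := by
    intro w
    have hTa : (0:ℝ) ≤ 1 - Φ₂ (w - Δ - a k) := (hΨpos _).le
    have hTb : (0:ℝ) ≤ 1 - Φ₂ (w - b k) := (hΨpos _).le
    have e1 : f w ^ α = C w ^ α * (1 - Φ₂ (w - Δ - a k)) ^ α * gaussianPDFReal Δ v₁ w ^ α := by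
      rw [hf_def]
      rw [Real.mul_rpow (mul_nonneg (hC_pos w).le hTa) (gaussianPDFReal_nonneg _ _ _),
        Real.mul_rpow (hC_pos w).le hTa]
    have e2 : g w ^ (1 - α) = C w ^ (1 - α) * (1 - Φ₂ (w - b k)) ^ (1 - α) * gaussianPDFReal 0 v₁ w ^ (1 - α) := by
      rw [hg_def]
      rw [Real.mul_rpow (mul_nonneg (hC_pos w).le hTb) (gaussianPDFReal_nonneg _ _ _),
        Real.mul_rpow (hC_pos w).le hTb]
    rw [e1, e2]
    have hrearr : C w ^ α * (1 - Φ₂ (w - Δ - a k)) ^ α * gaussianPDFReal Δ v₁ w ^ α *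
        (C w ^ (1 - α) * (1 - Φ₂ (w - b k)) ^ (1 - α) * gaussianPDFReal 0 v₁ w ^ (1 - α))
        = (C w ^ α * C w ^ (1 - α)) *
          ((1 - Φ₂ (w - Δ - a k)) ^ α * (1 - Φ₂ (w - b k)) ^ (1 - α)) *
          (gaussianPDFReal Δ v₁ w ^ α * gaussianPDFReal 0 v₁ w ^ (1 - α)) := by ring
    rw [hrearr]
    have hCC : C w ^ α * C w ^ (1 - α) = C w := by
      rw [← Real.rpow_add (hC_pos w)]; norm_num
    rw [hCC]
    -- the Gaussian part
    have hqp : gaussianPDFReal Δ v₁ w ^ α * gaussianPDFReal 0 v₁ w ^ (1 - α)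
        = K₁ * gaussianPDFReal (α * Δ) v₁ w := by
      rw [aux_gaussRenyi hv₁]
      norm_num [hK₁def]
    rw [hqp]
    -- tail part
    have htail : (1 - Φ₂ (w - Δ - a k)) ^ α * (1 - Φ₂ (w - b k)) ^ (1 - α) ≤ K₂ := by
      have hmono : (1 - Φ₂ (w - Δ - a k)) ≤ 1 - Φ₂ ((w - b k) - 2*Δ) := by
        have : (w - b k) - 2*Δ ≤ w - Δ - a k := by
          have := hab' k; linarith
        have := hΦmono this; linarith
      calc (1 - Φ₂ (w - Δ - a k)) ^ α * (1 - Φ₂ (w - b k)) ^ (1 - α)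
          ≤ (1 - Φ₂ ((w - b k) - 2*Δ)) ^ α * (1 - Φ₂ (w - b k)) ^ (1 - α) := by
            apply mul_le_mul_of_nonneg_right _ (Real.rpow_nonneg hTb _)
            exact Real.rpow_le_rpow hTa hmono hα0.le
        _ ≤ K₂ := by
            have h1 := hΨeq ((w - b k) - 2*Δ)
            have h2 := hΨeq (w - b k)
            rw [h1, h2, hp₂g]
            exact aux_tail hv₂ hα (2*Δ) (w - b k)
    calc C w * ((1 - Φ₂ (w - Δ - a k)) ^ α * (1 - Φ₂ (w - b k)) ^ (1 - α)) *
          (K₁ * gaussianPDFReal (α * Δ) v₁ w)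
        ≤ 1 * K₂ * (K₁ * gaussianPDFReal (α * Δ) v₁ w) := by
          apply mul_le_mul_of_nonneg_right _
            (mul_nonneg (Real.exp_nonneg _) (gaussianPDFReal_nonneg _ _ _))
          apply mul_le_mul (hC_le1 w) htail
            (mul_nonneg (Real.rpow_nonneg hTa _) (Real.rpow_nonneg hTb _)) zero_le_one
      _ = (K₂ * K₁) * gaussianPDFReal (α * Δ) v₁ w := by ring
  have hfg_meas : Measurable (fun w => f w ^ α * g w ^ (1 - α)) :=
    (hf_meas.pow_const α).mul (hg_meas.pow_const (1 - α))
  have hfg_nn : ∀ w, 0 ≤ f w ^ α * g w ^ (1 - α) := fun w =>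
    mul_nonneg (Real.rpow_nonneg (hf_nn w) _) (Real.rpow_nonneg (hg_pos w).le _)
  have hfg_int : Integrable (fun w => f w ^ α * g w ^ (1 - α)) :=
    (((integrable_gaussianPDFReal (α * Δ) v₁).const_mul (K₂ * K₁))).mono'
      hfg_meas.aestronglyMeasurable
      (Filter.Eventually.of_forall fun w => by
        rw [Real.norm_eq_abs, abs_of_nonneg (hfg_nn w)]; exact hptw w)
  -- Step A : P k a ≤ ∫ f
  have hPa_nn : 0 ≤ P k a := by
    rw [hP]
    apply integral_nonneg
    intro z
    apply mul_nonneg (mul_nonneg _ _)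
    · rw [hp₁g]; exact gaussianPDFReal_nonneg _ _ _
    · exact Finset.prod_nonneg fun i _ => hΦnn _
    · have := hΦle1 (z - a k); linarith
  have hPa_le : P k a ≤ ∫ w, f w := by
    rw [hP]
    have htrans := integral_sub_right_eq_self (μ := volume)
      (fun z => (∏ i ∈ s, Φ₂ (z - a i)) * (1 - Φ₂ (z - a k)) * p₁ z) Δ
    rw [← htrans]
    apply integral_mono _ hf_int
    · intro w
      simp only
      rw [hp₁shift]
      apply mul_le_mul_of_nonneg_right _ (gaussianPDFReal_nonneg _ _ _)
      apply mul_le_mul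
      · apply Finset.prod_le_prod (fun i _ => hΦnn _)
        intro i _
        apply hΦmono
        have := hba i; linarith
      · have : w - Δ - a k = w - Δ - a k := rfl
        exact le_refl _
      · have := hΦle1 (w - Δ - a k); linarith
      · exact (hC_pos w).le
    · -- integrability of translated function
      have hp₁meas : Measurable p₁ := hp₁g ▸ measurable_gaussianPDFReal 0 v₁
      apply (integrable_gaussianPDFReal Δ v₁).mono'
      · apply Measurable.aestronglyMeasurable
        refine (Measurable.mul (Measurable.mul ?_ ?_) ?_)
        · apply Finset.measurable_prod
          intro i _
          exact hΦmeas.comp ((measurable_id.sub_const Δ).sub_const (a i))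
        · exact measurable_const.sub (hΦmeas.comp ((measurable_id.sub_const Δ).sub_const (a k)))
        · exact hp₁meas.comp (measurable_id.sub_const Δ)
      · apply Filter.Eventually.of_forall
        intro w
        have hnn : 0 ≤ (∏ i ∈ s, Φ₂ (w - Δ - a i)) * (1 - Φ₂ (w - Δ - a k)) * p₁ (w - Δ) := by
          apply mul_nonneg (mul_nonneg (Finset.prod_nonneg fun i _ => hΦnn _) _)
          · rw [hp₁g]; exact gaussianPDFReal_nonneg _ _ _
          · have := hΦle1 (w - Δ - a k); linarith
        rw [Real.norm_eq_abs, abs_of_nonneg hnn, hp₁shift]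
        have h1 : (∏ i ∈ s, Φ₂ (w - Δ - a i)) * (1 - Φ₂ (w - Δ - a k)) ≤ 1 := by
          apply mul_le_one₀
          · exact Finset.prod_le_one (fun i _ => hΦnn _) (fun i _ => hΦle1 _)
          · have := hΦle1 (w - Δ - a k); linarith
          · have := hΦnn (w - Δ - a k); linarith
        calc (∏ i ∈ s, Φ₂ (w - Δ - a i)) * (1 - Φ₂ (w - Δ - a k)) * gaussianPDFReal Δ v₁ w
            ≤ 1 * gaussianPDFReal Δ v₁ w :=
              mul_le_mul_of_nonneg_right h1 (gaussianPDFReal_nonneg _ _ _)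
          _ = gaussianPDFReal Δ v₁ w := one_mul _
  -- Step B : reverse Hölder and conclusion
  have hPb_eq : P k b = ∫ w, g w := by
    rw [hP]
    congr 1
    funext z
    rw [hp₁g]
  have hvol : (volume : Measure ℝ) ≠ 0 := by
    intro h
    have h2 := congrArg (fun m : Measure ℝ => m Set.univ) h
    simp [Real.volume_univ] at h2
  have hstep := aux_revHolder (μ := volume) hvol hα hf_meas hg_meas hf_nn hg_pos
    hf_int hg_int hfg_int
  have hfinal : (∫ w, f w ^ α * g w ^ (1 - α)) ≤ K₂ * K₁ := by
    calc (∫ w, f w ^ α * g w ^ (1 - α))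
        ≤ ∫ w, (K₂ * K₁) * gaussianPDFReal (α * Δ) v₁ w :=
          integral_mono hfg_int
            ((integrable_gaussianPDFReal (α * Δ) v₁).const_mul (K₂ * K₁)) hptw
      _ = (K₂ * K₁) * ∫ w, gaussianPDFReal (α * Δ) v₁ w := integral_const_mul _ _
      _ = K₂ * K₁ := by rw [integral_gaussianPDFReal_eq_one _ hv₁ne, mul_one]
  have hmain : P k a ^ α * P k b ^ (1 - α) ≤ K₂ * K₁ := by
    calc P k a ^ α * P k b ^ (1 - α)
        ≤ (∫ w, f w) ^ α * (∫ w, g w) ^ (1 - α) := by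
          rw [hPb_eq]
          apply mul_le_mul_of_nonneg_right
            (Real.rpow_le_rpow hPa_nn hPa_le hα0.le)
            (Real.rpow_nonneg (integral_nonneg fun w => (hg_pos w).le) _)
      _ ≤ ∫ w, f w ^ α * g w ^ (1 - α) := hstep
      _ ≤ K₂ * K₁ := hfinal
  refine le_trans hmain ?_
  apply le_of_eq
  rw [hK₂def, hK₁def, ← Real.exp_add]
  congr 1
  rw [hv₁c, hv₂c]
  have h2 : Δ ^ 2 * σ₁ ^ 2 ≠ 0 := by positivity
  have h3 : Δ ^ 2 * σ₂ ^ 2 ≠ 0 := by positivity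
  field_simp
  ring
end

section
/- Let p₁ and p₂ be any probability density functions on ℝ (nonnegative, measurable, integrating to 1), let Φ₂(t) = ∫_{−∞}^t p₂(u) du, let Δ > 0, let k ≥ 1, and let a₁, …, a_k, b₁, …, b_k ∈ ℝ satisfy |a_i − b_i| ≤ Δ for all i ∈ {1, …, k}. Then ∫_ℝ ∫_{ℝ^k} (∏_{i=1}^{k−1} 𝟙[a_i + y_i < z] p₂(y_i)) · 𝟙[a_k + y_k ≥ z] p₂(y_k) · p₁(z) dy₁ ⋯ dy_k dz ≤ ∫_ℝ ∫_ℝ (∏_{i=1}^{k−1} Φ₂(z − b_i)) · 𝟙[b_k + y ≥ z] · p₂(y − 2Δ) · p₁(z − Δ) dy dz. -/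
open MeasureTheory Real

/-- the key shift inequality, formula (11) of the appendix,
used in the proofs of Theorems 2 and 3. Here the queries are indexed by
`Fin (n+1)` (so there are `k = n+1 ≥ 1` of them, the last one being
`Fin.last n`). The probability that the AboveThreshold mechanism with
threshold-noise density `p₁` and i.i.d. query-noise density `p₂` outputs the
last index on query values `a` is bounded by the corresponding expression for
the neighboring query values `b` (with `|a i − b i| ≤ Δ`), at the cost of
shifting the threshold noise by `Δ` and the last query noise by `2Δ`. -/
theorem aboveThreshold_shift_inequality
    (n : ℕ) (Δ : ℝ) (hΔ : 0 < Δ)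
    (p₁ p₂ : ℝ → ℝ) (hp₁m : Measurable p₁) (hp₂m : Measurable p₂)
    (hp₁0 : ∀ x : ℝ, 0 ≤ p₁ x) (hp₂0 : ∀ x : ℝ, 0 ≤ p₂ x)
    (hp₁int : ∫ x : ℝ, p₁ x = 1) (hp₂int : ∫ x : ℝ, p₂ x = 1)
    (Φ₂ : ℝ → ℝ) (hΦ₂ : ∀ t : ℝ, Φ₂ t = ∫ u in Set.Iic t, p₂ u)
    (a b : Fin (n + 1) → ℝ) (hab : ∀ i : Fin (n + 1), |a i - b i| ≤ Δ) :
    (∫ z : ℝ, ∫ y : Fin (n + 1) → ℝ,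
        (∏ i ∈ Finset.univ.erase (Fin.last n),
            (if a i + y i < z then (1 : ℝ) else 0) * p₂ (y i)) *
          ((if a (Fin.last n) + y (Fin.last n) ≥ z then (1 : ℝ) else 0) *
            p₂ (y (Fin.last n))) * p₁ z) ≤
      ∫ z : ℝ, ∫ y : ℝ,
        (∏ i ∈ Finset.univ.erase (Fin.last n), Φ₂ (z - b i)) *
          (if b (Fin.last n) + y ≥ z then (1 : ℝ) else 0) *
          p₂ (y - 2 * Δ) * p₁ (z - Δ) := by
  set L := Fin.last n with hL
  have hp₂i : Integrable p₂ := integrable_of_integral_eq_one hp₂int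
  have hp₁i : Integrable p₁ := integrable_of_integral_eq_one hp₁int
  have hΦmono : Monotone Φ₂ := by
    intro s t hst
    rw [hΦ₂, hΦ₂]
    exact setIntegral_mono_set hp₂i.integrableOn (ae_of_all _ hp₂0)
      (HasSubset.Subset.eventuallyLE (Set.Iic_subset_Iic.2 hst))
  have hΦ0 : ∀ t, 0 ≤ Φ₂ t := fun t => by
    rw [hΦ₂]; exact setIntegral_nonneg measurableSet_Iic fun x _ => hp₂0 x
  have hΦ1 : ∀ t, Φ₂ t ≤ 1 := fun t => by
    rw [hΦ₂, ← hp₂int]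
    exact setIntegral_le_integral hp₂i (ae_of_all _ hp₂0)
  -- basic 1-d integrals
  have hlt : ∀ c z : ℝ, (∫ y : ℝ, (if c + y < z then (1:ℝ) else 0) * p₂ y) = Φ₂ (z - c) := by
    intro c z
    have h1 : ∀ y : ℝ, (if c + y < z then (1:ℝ) else 0) * p₂ y
        = Set.indicator (Set.Iio (z - c)) p₂ y := by
      intro y
      by_cases h : c + y < z
      · rw [if_pos h, Set.indicator_of_mem (by simp only [Set.mem_Iio]; linarith), one_mul]
      · rw [if_neg h, Set.indicator_of_notMem (by simp only [Set.mem_Iio, not_lt] at h ⊢; linarith), zero_mul]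
    simp_rw [h1]
    rw [integral_indicator measurableSet_Iio, hΦ₂]
    exact setIntegral_congr_set Iio_ae_eq_Iic
  have hge : ∀ c z : ℝ, (∫ y : ℝ, (if c + y ≥ z then (1:ℝ) else 0) * p₂ y) = 1 - Φ₂ (z - c) := by
    intro c z
    have h1 : ∀ y : ℝ, (if c + y ≥ z then (1:ℝ) else 0) * p₂ y
        = Set.indicator (Set.Ici (z - c)) p₂ y := by
      intro y
      by_cases h : c + y ≥ z
      · rw [if_pos h, Set.indicator_of_mem (by simp only [Set.mem_Ici]; linarith), one_mul]
      · rw [if_neg h, Set.indicator_of_notMem (by simp only [Set.mem_Ici, not_le] at h ⊢; linarith), zero_mul]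
    simp_rw [h1]
    rw [integral_indicator measurableSet_Ici,
      setIntegral_congr_set Ioi_ae_eq_Ici.symm]
    have h2 := intervalIntegral.integral_Iic_add_Ioi (b := z - c) hp₂i.integrableOn hp₂i.integrableOn
    rw [hp₂int] at h2
    rw [hΦ₂]
    linarith
  -- compute the inner pi-space integral on the LHS
  have hinner : ∀ z : ℝ, (∫ y : Fin (n + 1) → ℝ,
        (∏ i ∈ Finset.univ.erase L,
            (if a i + y i < z then (1 : ℝ) else 0) * p₂ (y i)) *
          ((if a L + y L ≥ z then (1 : ℝ) else 0) * p₂ (y L)) * p₁ z)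
      = (∏ i ∈ Finset.univ.erase L, Φ₂ (z - a i)) * (1 - Φ₂ (z - a L)) * p₁ z := by
    intro z
    set f : Fin (n + 1) → ℝ → ℝ := fun i t =>
      (if i = L then (if a i + t ≥ z then (1:ℝ) else 0) else (if a i + t < z then 1 else 0)) * p₂ t
      with hf
    have key : ∀ y : Fin (n + 1) → ℝ,
        (∏ i ∈ Finset.univ.erase L, (if a i + y i < z then (1 : ℝ) else 0) * p₂ (y i)) *
          ((if a L + y L ≥ z then (1 : ℝ) else 0) * p₂ (y L))
        = ∏ i, f i (y i) := by
      intro y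
      rw [← Finset.prod_erase_mul Finset.univ _ (Finset.mem_univ L)]
      congr 1
      · refine Finset.prod_congr rfl fun i hi => ?_
        simp only [hf, if_neg (Finset.ne_of_mem_erase hi)]
      · simp [hf]
    simp_rw [key]
    rw [integral_mul_const, MeasureTheory.integral_fintype_prod_volume_eq_prod (ι := Fin (n + 1)) f,
      ← Finset.prod_erase_mul Finset.univ _ (Finset.mem_univ L)]
    congr 2
    · refine Finset.prod_congr rfl fun i hi => ?_
      simp only [hf, if_neg (Finset.ne_of_mem_erase hi)]
      exact hlt (a i) z
    · simp only [hf, if_pos rfl, if_true]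
      exact hge (a L) z
  have hfunext : (fun z : ℝ => ∫ y : Fin (n + 1) → ℝ,
        (∏ i ∈ Finset.univ.erase L,
            (if a i + y i < z then (1 : ℝ) else 0) * p₂ (y i)) *
          ((if a L + y L ≥ z then (1 : ℝ) else 0) * p₂ (y L)) * p₁ z)
      = fun z => (∏ i ∈ Finset.univ.erase L, Φ₂ (z - a i)) * (1 - Φ₂ (z - a L)) * p₁ z :=
    funext hinner
  rw [show (∫ z : ℝ, ∫ y : Fin (n + 1) → ℝ,
        (∏ i ∈ Finset.univ.erase L,
            (if a i + y i < z then (1 : ℝ) else 0) * p₂ (y i)) *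
          ((if a L + y L ≥ z then (1 : ℝ) else 0) * p₂ (y L)) * p₁ z)
      = ∫ z : ℝ, (∏ i ∈ Finset.univ.erase L, Φ₂ (z - a i)) * (1 - Φ₂ (z - a L)) * p₁ z
      from congrArg _ hfunext]
  -- compute the RHS
  have hr1 : ∀ z : ℝ, (∫ y : ℝ,
        (∏ i ∈ Finset.univ.erase L, Φ₂ (z - b i)) *
          (if b L + y ≥ z then (1 : ℝ) else 0) * p₂ (y - 2 * Δ) * p₁ (z - Δ))
      = (∏ i ∈ Finset.univ.erase L, Φ₂ (z - b i)) * (1 - Φ₂ (z - 2 * Δ - b L)) * p₁ (z - Δ) := by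
    intro z
    have harr : ∀ y : ℝ,
        (∏ i ∈ Finset.univ.erase L, Φ₂ (z - b i)) *
          (if b L + y ≥ z then (1 : ℝ) else 0) * p₂ (y - 2 * Δ) * p₁ (z - Δ)
        = ((if b L + y ≥ z then (1 : ℝ) else 0) * p₂ (y - 2 * Δ)) *
            ((∏ i ∈ Finset.univ.erase L, Φ₂ (z - b i)) * p₁ (z - Δ)) := fun y => by ring
    simp_rw [harr]
    rw [integral_mul_const]
    have h2 : (∫ y : ℝ, (if b L + y ≥ z then (1:ℝ) else 0) * p₂ (y - 2 * Δ))
        = 1 - Φ₂ (z - 2 * Δ - b L) := by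
      rw [← integral_add_right_eq_self
        (fun y : ℝ => (if b L + y ≥ z then (1:ℝ) else 0) * p₂ (y - 2 * Δ)) (2 * Δ)]
      simp only [add_sub_cancel_right]
      have harg : ∀ y : ℝ, (if b L + (y + 2 * Δ) ≥ z then (1:ℝ) else 0)
          = (if b L + 2 * Δ + y ≥ z then (1:ℝ) else 0) := by
        intro y
        rw [show b L + (y + 2 * Δ) = b L + 2 * Δ + y from by ring]
      simp_rw [harg]
      rw [hge (b L + 2 * Δ) z]
      ring_nf
    rw [h2]; ring
  rw [show (∫ z : ℝ, ∫ y : ℝ,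
        (∏ i ∈ Finset.univ.erase L, Φ₂ (z - b i)) *
          (if b L + y ≥ z then (1 : ℝ) else 0) * p₂ (y - 2 * Δ) * p₁ (z - Δ))
      = ∫ z : ℝ, (∏ i ∈ Finset.univ.erase L, Φ₂ (z - b i)) *
          (1 - Φ₂ (z - 2 * Δ - b L)) * p₁ (z - Δ) from congrArg _ (funext hr1)]
  -- shift the outer variable on the RHS by Δ
  rw [← integral_add_right_eq_self
    (fun z : ℝ => (∏ i ∈ Finset.univ.erase L, Φ₂ (z - b i)) *
        (1 - Φ₂ (z - 2 * Δ - b L)) * p₁ (z - Δ)) Δ]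
  simp only [add_sub_cancel_right]
  have hargz : ∀ z : ℝ, z + Δ - 2 * Δ - b L = z - Δ - b L := fun z => by ring
  simp_rw [hargz]
  -- now compare pointwise
  set G : ℝ → ℝ := fun z => (∏ i ∈ Finset.univ.erase L, Φ₂ (z + Δ - b i)) *
      (1 - Φ₂ (z - Δ - b L)) * p₁ z with hG
  have hGmeas : Measurable G := by
    have hΦz : ∀ c : ℝ, Measurable fun z : ℝ => Φ₂ (z - c) := fun c =>
      hΦmono.measurable.comp (measurable_id.sub_const c)
    refine ((Finset.measurable_prod _ fun i _ => ?_).mul ?_).mul hp₁m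
    · have : (fun z : ℝ => Φ₂ (z + Δ - b i)) = fun z : ℝ => Φ₂ (z - (b i - Δ)) :=
        funext fun z => by rw [show z + Δ - b i = z - (b i - Δ) from by ring]
      rw [this]; exact hΦz _
    · have : (fun z : ℝ => Φ₂ (z - Δ - b L)) = fun z : ℝ => Φ₂ (z - (Δ + b L)) :=
        funext fun z => by rw [show z - Δ - b L = z - (Δ + b L) from by ring]
      exact measurable_const.sub (by rw [this]; exact hΦz _)
  have hGbound : ∀ z, |G z| ≤ p₁ z := by
    intro z
    have h01p : 0 ≤ ∏ i ∈ Finset.univ.erase L, Φ₂ (z + Δ - b i) :=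
      Finset.prod_nonneg fun i _ => hΦ0 _
    have h1p : (∏ i ∈ Finset.univ.erase L, Φ₂ (z + Δ - b i)) ≤ 1 :=
      Finset.prod_le_one (fun i _ => hΦ0 _) (fun i _ => hΦ1 _)
    have h02 : 0 ≤ 1 - Φ₂ (z - Δ - b L) := by linarith [hΦ1 (z - Δ - b L)]
    have h12 : 1 - Φ₂ (z - Δ - b L) ≤ 1 := by linarith [hΦ0 (z - Δ - b L)]
    rw [abs_of_nonneg (mul_nonneg (mul_nonneg h01p h02) (hp₁0 z))]
    calc (∏ i ∈ Finset.univ.erase L, Φ₂ (z + Δ - b i)) * (1 - Φ₂ (z - Δ - b L)) * p₁ z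
        ≤ 1 * 1 * p₁ z := by
          apply mul_le_mul _ le_rfl (hp₁0 z) (by norm_num)
          exact mul_le_mul h1p h12 h02 zero_le_one
      _ = p₁ z := by ring
  have hGint : Integrable G :=
    hp₁i.mono' hGmeas.aestronglyMeasurable (ae_of_all _ hGbound)
  refine integral_mono_of_nonneg (ae_of_all _ fun z => ?_) hGint (ae_of_all _ fun z => ?_)
  · have : 0 ≤ 1 - Φ₂ (z - a L) := by linarith [hΦ1 (z - a L)]
    have h0 : 0 ≤ ∏ i ∈ Finset.univ.erase L, Φ₂ (z - a i) :=
      Finset.prod_nonneg fun i _ => hΦ0 _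
    exact mul_nonneg (mul_nonneg h0 this) (hp₁0 z)
  · simp only [hG]
    have hprod : (∏ i ∈ Finset.univ.erase L, Φ₂ (z - a i))
        ≤ ∏ i ∈ Finset.univ.erase L, Φ₂ (z + Δ - b i) := by
      refine Finset.prod_le_prod (fun i _ => hΦ0 _) (fun i hi => hΦmono ?_)
      have := abs_le.1 (hab i)
      linarith [this.1]
    have hlast : 1 - Φ₂ (z - a L) ≤ 1 - Φ₂ (z - Δ - b L) := by
      have := abs_le.1 (hab L)
      have := hΦmono (show z - Δ - b L ≤ z - a L by linarith [(abs_le.1 (hab L)).2])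
      linarith
    have h0a : 0 ≤ ∏ i ∈ Finset.univ.erase L, Φ₂ (z - a i) :=
      Finset.prod_nonneg fun i _ => hΦ0 _
    have h0last : 0 ≤ 1 - Φ₂ (z - a L) := by linarith [hΦ1 (z - a L)]
    have h0pb : 0 ≤ ∏ i ∈ Finset.univ.erase L, Φ₂ (z + Δ - b i) :=
      Finset.prod_nonneg fun i _ => hΦ0 _
    exact mul_le_mul (mul_le_mul hprod hlast h0last h0pb) le_rfl (hp₁0 z)
      (mul_nonneg h0pb (by linarith [hΦ0 (z - Δ - b L), hΦ1 (z - Δ - b L)]))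
end
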